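/- arXiv:1402.4360 — 3 statements merged into one kernel-verified Lean document; each statement's English description precedes it below -/
import Mathlib

section
/- Let κ be a primitive from 𝒜 × ℬ to 𝒰 × 𝒱 that fails the completeness condition. Let à and B̃ be independent random variables on a probability space with values in 𝒜 and ℬ (with arbitrary marginal distributions), and let (Ũ,Ṽ) be generated by one use of κ with inputs (Ã,B̃) and constant side information. Then the pair (⟨Ã,Ũ⟩, ⟨B̃,Ṽ⟩) is trivial. -/
open MeasureTheory Real
open scoped ENNReal

namespace SecureComputation

variable {Ω : Type*} [MeasurableSpace Ω]

/-- The pair random variable `⟨X,Y⟩`. -/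
def pair {𝒳 𝒴 : Type*} (X : Ω → 𝒳) (Y : Ω → 𝒴) : Ω → 𝒳 × 𝒴 := fun ω => (X ω, Y ω)

/-- Shannon entropy `H[X]` of a finite-valued random variable. -/
noncomputable def ent {𝒳 : Type*} (μ : Measure Ω) (X : Ω → 𝒳) : ℝ :=
  ∑' x : 𝒳, negMulLog ((μ (X ⁻¹' {x})).toReal)

/-- Mutual information `I[X;Y]`. -/
noncomputable def mi {𝒳 𝒴 : Type*} (μ : Measure Ω) (X : Ω → 𝒳) (Y : Ω → 𝒴) : ℝ :=
  ent μ X + ent μ Y - ent μ (pair X Y)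

/-- Conditional mutual information `I[X;Y|Z]`. -/
noncomputable def cmi {𝒳 𝒴 𝒵 : Type*} (μ : Measure Ω) (X : Ω → 𝒳) (Y : Ω → 𝒴)
    (Z : Ω → 𝒵) : ℝ :=
  ent μ (pair X Z) + ent μ (pair Y Z) - ent μ (pair (pair X Y) Z) - ent μ Z

/-- Conditional entropy `H[X|Y]`. -/
noncomputable def condEnt {𝒳 𝒴 : Type*} (μ : Measure Ω) (X : Ω → 𝒳) (Y : Ω → 𝒴) : ℝ :=
  ent μ (pair X Y) - ent μ Y

/-- A finite-valued random variable: preimages of points are measurable. -/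
def DiscreteRV {𝒳 : Type*} (X : Ω → 𝒳) : Prop := ∀ x, MeasurableSet (X ⁻¹' {x})

/-- The pair `(X,Y)` is trivial: some finite-valued `Z` on the same space has
`I[X;Y|Z] = 0`, `I[Z;X|Y] = 0`, `I[Z;Y|X] = 0`. -/
def IsTrivialPair {𝒳 𝒴 : Type*} (μ : Measure Ω) (X : Ω → 𝒳) (Y : Ω → 𝒴) : Prop :=
  ∃ (𝒵 : Type) (_ : Fintype 𝒵) (Z : Ω → 𝒵), DiscreteRV Z ∧
    cmi μ X Y Z = 0 ∧ cmi μ Z X Y = 0 ∧ cmi μ Z Y X = 0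

/-- `(U,V)` is generated by one use of the primitive `κ` with inputs `(A,B)` and
side information `T`. -/
def GeneratedBy {𝒜 ℬ 𝒰 𝒱 𝒯 : Type*} (μ : Measure Ω) (κ : 𝒜 × ℬ → PMF (𝒰 × 𝒱))
    (A : Ω → 𝒜) (B : Ω → ℬ) (U : Ω → 𝒰) (V : Ω → 𝒱) (T : Ω → 𝒯) : Prop :=
  ∀ (t : 𝒯) (a : 𝒜) (b : ℬ) (u : 𝒰) (v : 𝒱),
    μ {ω | T ω = t ∧ A ω = a ∧ B ω = b ∧ U ω = u ∧ V ω = v} =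
      μ {ω | T ω = t ∧ A ω = a ∧ B ω = b} * κ (a, b) (u, v)

/-- The primitive `κ` fails the completeness condition: whenever its inputs are
independent and uniformly distributed and `(U,V)` is generated by one use of `κ`
(with constant side information), the pair `(⟨A,U⟩, ⟨B,V⟩)` is trivial. -/
def FailsCompleteness {𝒜 ℬ 𝒰 𝒱 : Type} (κ : 𝒜 × ℬ → PMF (𝒰 × 𝒱)) : Prop :=
  ∀ (Ω' : Type) (_ : MeasurableSpace Ω') (μ : Measure Ω'), IsProbabilityMeasure μ →
    ∀ (A : Ω' → 𝒜) (B : Ω' → ℬ) (U : Ω' → 𝒰) (V : Ω' → 𝒱),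
      DiscreteRV A → DiscreteRV B → DiscreteRV U → DiscreteRV V →
      (∀ (a : 𝒜) (b : ℬ), μ {ω | A ω = a ∧ B ω = b} =
        ((Nat.card 𝒜 : ℝ≥0∞) * (Nat.card ℬ : ℝ≥0∞))⁻¹) →
      GeneratedBy μ κ A B U V (fun _ => ()) →
      IsTrivialPair μ (pair A U) (pair B V)


section Aux

variable {Ω : Type*} [MeasurableSpace Ω]

lemma measure_eq_sum_inter {𝒴 : Type*} [Fintype 𝒴] (μ : Measure Ω)
    {Y : Ω → 𝒴} (hY : DiscreteRV Y) {S : Set Ω} (hS : MeasurableSet S) :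
    μ S = ∑ y, μ (S ∩ Y ⁻¹' {y}) := by
  have h1 : S = ⋃ y, S ∩ Y ⁻¹' {y} := by
    ext ω
    simp only [Set.mem_iUnion, Set.mem_inter_iff, Set.mem_preimage, Set.mem_singleton_iff]
    exact ⟨fun h => ⟨Y ω, h, rfl⟩, fun ⟨y, h, _⟩ => h⟩
  have hd : Pairwise (Function.onFun Disjoint fun y => S ∩ Y ⁻¹' {y}) := by
    intro i j hij
    simp only [Function.onFun]
    apply Set.disjoint_left.2
    rintro ω ⟨-, h1⟩ ⟨-, h2⟩
    simp only [Set.mem_preimage, Set.mem_singleton_iff] at h1 h2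
    exact hij (h1.symm.trans h2)
  conv_lhs => rw [h1]
  rw [measure_iUnion hd (fun y => hS.inter (hY y)), tsum_fintype]

lemma ent_pair_eq {𝒳 𝒵 : Type*} [Fintype 𝒳] [Fintype 𝒵] (μ : Measure Ω) (X : Ω → 𝒳) (Z : Ω → 𝒵) :
    ent μ (pair X Z) = ∑ x, ∑ z, negMulLog ((μ (X ⁻¹' {x} ∩ Z ⁻¹' {z})).toReal) := by
  rw [ent, tsum_fintype, Fintype.sum_prod_type]
  refine Finset.sum_congr rfl fun x _ => Finset.sum_congr rfl fun z _ => ?_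
  have h : (pair X Z) ⁻¹' {(x, z)} = X ⁻¹' {x} ∩ Z ⁻¹' {z} := by
    ext ω; simp [pair, Prod.ext_iff]
  rw [h]

lemma ent_eq_sum {𝒵 : Type*} [Fintype 𝒵] (μ : Measure Ω) (Z : Ω → 𝒵) :
    ent μ Z = ∑ z, negMulLog ((μ (Z ⁻¹' {z})).toReal) := by
  rw [ent, tsum_fintype]

end Aux

section Master

variable {Ω : Type*} [MeasurableSpace Ω]

lemma neg_sum_mul {ι : Type*} (s : Finset ι) (f : ι → ℝ) (c : ℝ) :
    -((∑ i ∈ s, f i) * c) = ∑ i ∈ s, -(f i * c) := by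
  rw [Finset.sum_mul]
  exact (Finset.sum_neg_distrib _).symm

lemma sum_rot {α β γ : Type*} [Fintype α] [Fintype β] [Fintype γ] (f : α → β → γ → ℝ) :
    ∑ a, ∑ b, ∑ c, f a b c = ∑ c, ∑ a, ∑ b, f a b c := by
  have h1 : ∀ a : α, ∑ b, ∑ c, f a b c = ∑ c, ∑ b, f a b c := fun a => Finset.sum_comm
  simp_rw [h1]
  exact Finset.sum_comm

lemma negMulLog_sum {ι : Type*} (s : Finset ι) (f : ι → ℝ) :
    negMulLog (∑ i ∈ s, f i) = ∑ i ∈ s, -(f i * log (∑ j ∈ s, f j)) := by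
  rw [negMulLog_def]
  simp only [neg_mul]
  exact neg_sum_mul s f _

lemma cmi_eq_zero_iff {𝒳 𝒴 𝒵 : Type*} [Fintype 𝒳] [Fintype 𝒴] [Fintype 𝒵]
    (μ : Measure Ω) [IsProbabilityMeasure μ] {X : Ω → 𝒳} {Y : Ω → 𝒴} {Z : Ω → 𝒵}
    (hX : DiscreteRV X) (hY : DiscreteRV Y) (hZ : DiscreteRV Z) :
    cmi μ X Y Z = 0 ↔ ∀ x y z,
      (μ (X ⁻¹' {x} ∩ Y ⁻¹' {y} ∩ Z ⁻¹' {z})).toReal * (μ (Z ⁻¹' {z})).toReal =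
      (μ (X ⁻¹' {x} ∩ Z ⁻¹' {z})).toReal * (μ (Y ⁻¹' {y} ∩ Z ⁻¹' {z})).toReal := by
  classical
  set P : 𝒳 → 𝒴 → 𝒵 → ℝ := fun x y z => (μ (X ⁻¹' {x} ∩ Y ⁻¹' {y} ∩ Z ⁻¹' {z})).toReal with hP
  have hPnn : ∀ x y z, 0 ≤ P x y z := fun _ _ _ => ENNReal.toReal_nonneg
  set pxz : 𝒳 → 𝒵 → ℝ := fun x z => ∑ y, P x y z with hpxz
  set pyz : 𝒴 → 𝒵 → ℝ := fun y z => ∑ x, P x y z with hpyz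
  set pz : 𝒵 → ℝ := fun z => ∑ x, ∑ y, P x y z with hpz
  have hpxznn : ∀ x z, 0 ≤ pxz x z := fun x z => Finset.sum_nonneg fun y _ => hPnn x y z
  have hpyznn : ∀ y z, 0 ≤ pyz y z := fun y z => Finset.sum_nonneg fun x _ => hPnn x y z
  have hpznn : ∀ z, 0 ≤ pz z := fun z =>
    Finset.sum_nonneg fun x _ => Finset.sum_nonneg fun y _ => hPnn x y z
  -- marginal identities
  have hMxz : ∀ x z, (μ (X ⁻¹' {x} ∩ Z ⁻¹' {z})).toReal = pxz x z := by
    intro x z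
    rw [measure_eq_sum_inter μ hY ((hX x).inter (hZ z)),
      ENNReal.toReal_sum (fun _ _ => measure_ne_top μ _)]
    refine Finset.sum_congr rfl fun y _ => ?_
    have h : X ⁻¹' {x} ∩ Z ⁻¹' {z} ∩ Y ⁻¹' {y} = X ⁻¹' {x} ∩ Y ⁻¹' {y} ∩ Z ⁻¹' {z} := by
      ext ω; simp only [Set.mem_inter_iff]; tauto
    rw [h]
  have hMyz : ∀ y z, (μ (Y ⁻¹' {y} ∩ Z ⁻¹' {z})).toReal = pyz y z := by
    intro y z
    rw [measure_eq_sum_inter μ hX ((hY y).inter (hZ z)),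
      ENNReal.toReal_sum (fun _ _ => measure_ne_top μ _)]
    refine Finset.sum_congr rfl fun x _ => ?_
    have h : Y ⁻¹' {y} ∩ Z ⁻¹' {z} ∩ X ⁻¹' {x} = X ⁻¹' {x} ∩ Y ⁻¹' {y} ∩ Z ⁻¹' {z} := by
      ext ω; simp only [Set.mem_inter_iff]; tauto
    rw [h]
  have hMz : ∀ z, (μ (Z ⁻¹' {z})).toReal = pz z := by
    intro z
    rw [measure_eq_sum_inter μ hX (hZ z), ENNReal.toReal_sum (fun _ _ => measure_ne_top μ _)]
    refine Finset.sum_congr rfl fun x _ => ?_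
    rw [measure_eq_sum_inter μ hY ((hZ z).inter (hX x)),
      ENNReal.toReal_sum (fun _ _ => measure_ne_top μ _)]
    refine Finset.sum_congr rfl fun y _ => ?_
    have h : Z ⁻¹' {z} ∩ X ⁻¹' {x} ∩ Y ⁻¹' {y} = X ⁻¹' {x} ∩ Y ⁻¹' {y} ∩ Z ⁻¹' {z} := by
      ext ω; simp only [Set.mem_inter_iff]; tauto
    rw [h]
  -- the cmi as a single triple sum
  have hcmi : cmi μ X Y Z =
      ∑ x, ∑ y, ∑ z, P x y z *
        (log (P x y z) + log (pz z) - log (pxz x z) - log (pyz y z)) := by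
    have e1 : ent μ (pair X Z) = ∑ x, ∑ y, ∑ z, (-(P x y z * log (pxz x z))) := by
      rw [ent_pair_eq μ X Z]
      refine Finset.sum_congr rfl fun x _ => ?_
      rw [Finset.sum_comm]
      refine Finset.sum_congr rfl fun z _ => ?_
      rw [hMxz x z]
      exact negMulLog_sum Finset.univ (fun y => P x y z)
    have e2 : ent μ (pair Y Z) = ∑ x, ∑ y, ∑ z, (-(P x y z * log (pyz y z))) := by
      rw [ent_pair_eq μ Y Z]
      rw [show (∑ x, ∑ y, ∑ z, (-(P x y z * log (pyz y z)))) =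
          ∑ y, ∑ x, ∑ z, (-(P x y z * log (pyz y z))) from Finset.sum_comm]
      refine Finset.sum_congr rfl fun y _ => ?_
      rw [Finset.sum_comm]
      refine Finset.sum_congr rfl fun z _ => ?_
      rw [hMyz y z]
      exact negMulLog_sum Finset.univ (fun x => P x y z)
    have e3 : ent μ (pair (pair X Y) Z) = ∑ x, ∑ y, ∑ z, negMulLog (P x y z) := by
      rw [ent, tsum_fintype, Fintype.sum_prod_type, Fintype.sum_prod_type]
      refine Finset.sum_congr rfl fun x _ => Finset.sum_congr rfl fun y _ =>
        Finset.sum_congr rfl fun z _ => ?_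
      have h : (pair (pair X Y) Z) ⁻¹' {((x, y), z)} = X ⁻¹' {x} ∩ Y ⁻¹' {y} ∩ Z ⁻¹' {z} := by
        ext ω; simp [pair, Prod.ext_iff, and_assoc]
      rw [h]
    have e4 : ent μ Z = ∑ x, ∑ y, ∑ z, (-(P x y z * log (pz z))) := by
      rw [ent_eq_sum μ Z]
      rw [sum_rot (f := fun x y z => (-(P x y z * log (pz z))))]
      refine Finset.sum_congr rfl fun z _ => ?_
      rw [hMz z]
      rw [negMulLog_sum Finset.univ (fun x => ∑ y, P x y z)]
      exact Finset.sum_congr rfl fun x _ => neg_sum_mul Finset.univ (fun y => P x y z) _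
    rw [cmi, e1, e2, e3, e4]
    simp only [← Finset.sum_add_distrib, ← Finset.sum_sub_distrib]
    refine Finset.sum_congr rfl fun x _ => Finset.sum_congr rfl fun y _ =>
      Finset.sum_congr rfl fun z _ => ?_
    rw [negMulLog_def]
    simp only []
    ring
  -- bounds on marginals
  have hPle_xz : ∀ x y z, P x y z ≤ pxz x z := fun x y z =>
    Finset.single_le_sum (fun y' _ => hPnn x y' z) (Finset.mem_univ y)
  have hPle_yz : ∀ x y z, P x y z ≤ pyz y z := fun x y z =>
    Finset.single_le_sum (fun x' _ => hPnn x' y z) (Finset.mem_univ x)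
  have hxz_le_z : ∀ x z, pxz x z ≤ pz z := fun x z =>
    Finset.single_le_sum (fun x' _ => hpxznn x' z) (Finset.mem_univ x)
  have hPle_z : ∀ x y z, P x y z ≤ pz z := fun x y z =>
    le_trans (hPle_xz x y z) (hxz_le_z x z)
  constructor
  · -- cmi = 0 → factorization
    intro h0
    set b : 𝒳 → 𝒴 → 𝒵 → ℝ := fun x y z => pxz x z * pyz y z / pz z with hbdef
    have hbnn : ∀ x y z, 0 ≤ b x y z := fun x y z =>
      div_nonneg (mul_nonneg (hpxznn x z) (hpyznn y z)) (hpznn z)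
    -- sum of b over x,y equals pz z
    have hbsum : ∀ z, (∑ x, ∑ y, b x y z) = pz z := by
      intro z
      by_cases hz : pz z = 0
      · rw [hz]
        refine Finset.sum_eq_zero fun x _ => Finset.sum_eq_zero fun y _ => ?_
        simp [hbdef, hz]
      · have : (∑ x, ∑ y, b x y z) = (∑ x, pxz x z) * (∑ y, pyz y z) / pz z := by
          rw [Finset.sum_mul, Finset.sum_div]
          refine Finset.sum_congr rfl fun x _ => ?_
          rw [Finset.mul_sum, Finset.sum_div]
        rw [this]
        have hx : (∑ x, pxz x z) = pz z := rfl
        have hy : (∑ y, pyz y z) = pz z := by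
          rw [hpyz, hpz]; exact Finset.sum_comm
        rw [hx, hy]
        field_simp
    have hsumPb : (∑ x, ∑ y, ∑ z, b x y z) = ∑ x, ∑ y, ∑ z, P x y z := by
      rw [sum_rot (f := fun x y z => b x y z), sum_rot (f := fun x y z => P x y z)]
      exact Finset.sum_congr rfl fun z _ => hbsum z
    -- termwise inequality
    have hterm : ∀ x y z, P x y z - b x y z ≤
        P x y z * (log (P x y z) + log (pz z) - log (pxz x z) - log (pyz y z)) := by
      intro x y z
      rcases eq_or_lt_of_le (hPnn x y z) with h | h
      · rw [← h]
        simpa using hbnn x y z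
      · have hzpos : 0 < pz z := lt_of_lt_of_le h (hPle_z x y z)
        have hxzpos : 0 < pxz x z := lt_of_lt_of_le h (hPle_xz x y z)
        have hyzpos : 0 < pyz y z := lt_of_lt_of_le h (hPle_yz x y z)
        have hbpos : 0 < b x y z := div_pos (mul_pos hxzpos hyzpos) hzpos
        set t : ℝ := b x y z / P x y z with ht
        have htpos : 0 < t := div_pos hbpos h
        have hlog : log (P x y z) + log (pz z) - log (pxz x z) - log (pyz y z) = -log t := by
          rw [ht]
          simp only [hbdef]
          rw [Real.log_div (ne_of_gt (div_pos (mul_pos hxzpos hyzpos) hzpos)) (ne_of_gt h),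
            Real.log_div (ne_of_gt (mul_pos hxzpos hyzpos)) (ne_of_gt hzpos),
            Real.log_mul (ne_of_gt hxzpos) (ne_of_gt hyzpos)]
          ring
        rw [hlog]
        have hle : log t ≤ t - 1 := Real.log_le_sub_one_of_pos htpos
        have : P x y z * -log t ≥ P x y z * (1 - t) := by
          apply mul_le_mul_of_nonneg_left _ (le_of_lt h)
          linarith
        have htP : P x y z * t = b x y z := by
          rw [ht]; field_simp
        nlinarith
    -- total sum is zero
    rw [hcmi] at h0
    have hzero : ∀ x ∈ Finset.univ, (∑ y, ∑ z,
        (P x y z * (log (P x y z) + log (pz z) - log (pxz x z) - log (pyz y z)) -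
          (P x y z - b x y z))) = 0 → True := fun _ _ _ => trivial
    have hkey : ∀ x y z,
        P x y z * (log (P x y z) + log (pz z) - log (pxz x z) - log (pyz y z)) -
          (P x y z - b x y z) = 0 := by
      have hsum0 : (∑ x, ∑ y, ∑ z,
          (P x y z * (log (P x y z) + log (pz z) - log (pxz x z) - log (pyz y z)) -
            (P x y z - b x y z))) = 0 := by
        simp only [Finset.sum_sub_distrib]
        rw [h0, hsumPb]
        ring
      have hnn : ∀ x y z, 0 ≤
          P x y z * (log (P x y z) + log (pz z) - log (pxz x z) - log (pyz y z)) -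
            (P x y z - b x y z) := fun x y z => sub_nonneg.2 (hterm x y z)
      intro x y z
      have h1 := (Finset.sum_eq_zero_iff_of_nonneg (fun x _ =>
        Finset.sum_nonneg fun y _ => Finset.sum_nonneg fun z _ => hnn x y z)).1 hsum0 x
        (Finset.mem_univ x)
      have h2 := (Finset.sum_eq_zero_iff_of_nonneg (fun y _ =>
        Finset.sum_nonneg fun z _ => hnn x y z)).1 h1 y (Finset.mem_univ y)
      exact (Finset.sum_eq_zero_iff_of_nonneg (fun z _ => hnn x y z)).1 h2 z (Finset.mem_univ z)
    intro x y z
    rw [hMz z, hMxz x z, hMyz y z]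
    show P x y z * pz z = pxz x z * pyz y z
    have hk := hkey x y z
    rcases eq_or_lt_of_le (hPnn x y z) with h | h
    · -- P = 0 case: b = 0
      have hb0 : b x y z = 0 := by
        rw [← h] at hk
        simp at hk
        linarith
      rw [← h, zero_mul]
      have hb0' : pxz x z * pyz y z / pz z = 0 := by
        rw [hbdef] at hb0
        exact hb0
      rcases div_eq_zero_iff.1 hb0' with h1 | h2
      · exact h1.symm
      · have hx0 : pxz x z = 0 :=
          le_antisymm (h2 ▸ hxz_le_z x z) (hpxznn x z)
        rw [hx0, zero_mul]
    · -- P > 0 case: t = 1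
      have hzpos : 0 < pz z := lt_of_lt_of_le h (hPle_z x y z)
      have hxzpos : 0 < pxz x z := lt_of_lt_of_le h (hPle_xz x y z)
      have hyzpos : 0 < pyz y z := lt_of_lt_of_le h (hPle_yz x y z)
      have hbpos : 0 < b x y z := div_pos (mul_pos hxzpos hyzpos) hzpos
      set t : ℝ := b x y z / P x y z with ht
      have htpos : 0 < t := div_pos hbpos h
      have hlog : log (P x y z) + log (pz z) - log (pxz x z) - log (pyz y z) = -log t := by
        rw [ht]
        simp only [hbdef]
        rw [Real.log_div (ne_of_gt (div_pos (mul_pos hxzpos hyzpos) hzpos)) (ne_of_gt h),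
          Real.log_div (ne_of_gt (mul_pos hxzpos hyzpos)) (ne_of_gt hzpos),
          Real.log_mul (ne_of_gt hxzpos) (ne_of_gt hyzpos)]
        ring
      rw [hlog] at hk
      have htP : P x y z * t = b x y z := by
        rw [ht]; field_simp
      have hlogt : log t = t - 1 := by
        have h2 : P x y z * (-log t) = P x y z * (1 - t) := by nlinarith [hk, htP]
        have h' : -log t = 1 - t := mul_left_cancel₀ (ne_of_gt h) h2
        linarith
      have ht1 : t = 1 := by
        by_contra hne
        exact absurd hlogt (ne_of_lt (Real.log_lt_sub_one_of_pos htpos hne))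
      have hbP : b x y z = P x y z := by
        rw [ht] at ht1
        field_simp at ht1
        linarith
      have hbP' : pxz x z * pyz y z / pz z = P x y z := by
        rw [hbdef] at hbP
        exact hbP
      have := (div_eq_iff (ne_of_gt hzpos)).1 hbP'
      linarith
  · -- factorization → cmi = 0
    intro hfac
    rw [hcmi]
    refine Finset.sum_eq_zero fun x _ => Finset.sum_eq_zero fun y _ =>
      Finset.sum_eq_zero fun z _ => ?_
    rcases eq_or_lt_of_le (hPnn x y z) with h | h
    · rw [← h, zero_mul]
    · have hzpos : 0 < pz z := lt_of_lt_of_le h (hPle_z x y z)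
      have hxzpos : 0 < pxz x z := lt_of_lt_of_le h (hPle_xz x y z)
      have hyzpos : 0 < pyz y z := lt_of_lt_of_le h (hPle_yz x y z)
      have hf := hfac x y z
      rw [hMz z, hMxz x z, hMyz y z] at hf
      have hf' : P x y z * pz z = pxz x z * pyz y z := hf
      have hl : log (P x y z) + log (pz z) - log (pxz x z) - log (pyz y z)
          = log (P x y z * pz z) - log (pxz x z * pyz y z) := by
        rw [Real.log_mul (ne_of_gt h) (ne_of_gt hzpos),
          Real.log_mul (ne_of_gt hxzpos) (ne_of_gt hyzpos)]
        ring
      rw [hl, hf', sub_self, mul_zero]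

end Master

section Transfer

variable {𝒳 𝒴 𝒵 : Type*} [Fintype 𝒳] [Fintype 𝒴] [DecidableEq 𝒵]

/-- On the support of `s`, `w x ·` is constant (given F3). -/
lemma claimA (s : 𝒳 → 𝒴 → ℝ) (w : 𝒳 → 𝒴 → 𝒵) (hs : ∀ x y, 0 ≤ s x y)
    (F3 : ∀ x y z, (if w x y = z then s x y else 0) * (∑ y', s x y') =
      (∑ y', if w x y' = z then s x y' else 0) * s x y) :
    ∀ x y y', s x y ≠ 0 → s x y' ≠ 0 → w x y' = w x y := by
  intro x y y' hxy hxy'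
  have h := F3 x y (w x y)
  rw [if_pos rfl] at h
  have h' : s x y * (∑ y'', s x y'') = s x y * (∑ y'', if w x y'' = w x y then s x y'' else 0) :=
    h.trans (mul_comm _ _)
  have hsum := mul_left_cancel₀ hxy h'
  have hle : ∀ y'' ∈ Finset.univ, (if w x y'' = w x y then s x y'' else 0) ≤ s x y'' := by
    intro y'' _
    by_cases hc : w x y'' = w x y
    · rw [if_pos hc]
    · rw [if_neg hc]; exact hs x y''
  have := (Finset.sum_eq_sum_iff_of_le hle).1 hsum.symm y' (Finset.mem_univ y')
  by_contra hne
  rw [if_neg hne] at this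
  exact hxy' this.symm

/-- On the support of `s`, `w · y` is constant (given F2). -/
lemma claimB (s : 𝒳 → 𝒴 → ℝ) (w : 𝒳 → 𝒴 → 𝒵) (hs : ∀ x y, 0 ≤ s x y)
    (F2 : ∀ x y z, (if w x y = z then s x y else 0) * (∑ x', s x' y) =
      (∑ x', if w x' y = z then s x' y else 0) * s x y) :
    ∀ x x' y, s x y ≠ 0 → s x' y ≠ 0 → w x' y = w x y := by
  intro x x' y hxy hx'y
  exact claimA (fun y x => s x y) (fun y x => w x y)
    (fun y x => hs x y)
    (fun y x z => F2 x y z) y x x' hxy hx'y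

lemma transferT3 (s : 𝒳 → 𝒴 → ℝ) (f : 𝒳 → ℝ) (g : 𝒴 → ℝ) (w : 𝒳 → 𝒴 → 𝒵)
    (hs : ∀ x y, 0 ≤ s x y)
    (F3 : ∀ x y z, (if w x y = z then s x y else 0) * (∑ y', s x y') =
      (∑ y', if w x y' = z then s x y' else 0) * s x y) :
    ∀ x y z, (if w x y = z then f x * g y * s x y else 0) * (∑ y', f x * g y' * s x y') =
      (∑ y', if w x y' = z then f x * g y' * s x y' else 0) * (f x * g y * s x y) := by
  intro x y z
  by_cases hr : f x * g y * s x y = 0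
  · rw [hr, mul_zero, ite_self, zero_mul]
  · have hsxy : s x y ≠ 0 := fun h0 => hr (by rw [h0, mul_zero])
    have key : ∀ y', (if w x y = z then (1:ℝ) else 0) * (f x * g y' * s x y') =
        (if w x y' = z then f x * g y' * s x y' else 0) := by
      intro y'
      by_cases hy' : s x y' = 0
      · simp [hy']
      · rw [claimA s w hs F3 x y y' hsxy hy']
        by_cases hc : w x y = z
        · simp only [if_pos hc, one_mul]
        · simp only [if_neg hc, zero_mul]
    have hsum : (if w x y = z then (1:ℝ) else 0) * (∑ y', f x * g y' * s x y') =
        ∑ y', if w x y' = z then f x * g y' * s x y' else 0 := by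
      rw [Finset.mul_sum]
      exact Finset.sum_congr rfl fun y' _ => key y'
    rw [← hsum]
    by_cases hc : w x y = z
    · simp only [if_pos hc, one_mul]; ring
    · simp only [if_neg hc, zero_mul]

lemma transferT2 (s : 𝒳 → 𝒴 → ℝ) (f : 𝒳 → ℝ) (g : 𝒴 → ℝ) (w : 𝒳 → 𝒴 → 𝒵)
    (hs : ∀ x y, 0 ≤ s x y)
    (F2 : ∀ x y z, (if w x y = z then s x y else 0) * (∑ x', s x' y) =
      (∑ x', if w x' y = z then s x' y else 0) * s x y) :
    ∀ x y z, (if w x y = z then f x * g y * s x y else 0) * (∑ x', f x' * g y * s x' y) =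
      (∑ x', if w x' y = z then f x' * g y * s x' y else 0) * (f x * g y * s x y) := by
  intro x y z
  have h := transferT3 (fun y x => s x y) g f (fun y x => w x y)
    (fun y x => hs x y) (fun y x z => F2 x y z) y x z
  calc (if w x y = z then f x * g y * s x y else 0) * (∑ x', f x' * g y * s x' y)
      = (if w x y = z then g y * f x * s x y else 0) * (∑ x', g y * f x' * s x' y) := by
        rw [show f x * g y * s x y = g y * f x * s x y from by ring]
        exact congrArg _ (Finset.sum_congr rfl fun x' _ => by ring)
    _ = (∑ x', if w x' y = z then g y * f x' * s x' y else 0) * (g y * f x * s x y) := h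
    _ = (∑ x', if w x' y = z then f x' * g y * s x' y else 0) * (f x * g y * s x y) := by
        rw [show g y * f x * s x y = f x * g y * s x y from by ring]
        refine congrArg (· * _) (Finset.sum_congr rfl fun x' _ => ?_)
        by_cases hc : w x' y = z
        · rw [if_pos hc, if_pos hc]; ring
        · rw [if_neg hc, if_neg hc]

lemma transferT1 (s : 𝒳 → 𝒴 → ℝ) (f : 𝒳 → ℝ) (g : 𝒴 → ℝ) (w : 𝒳 → 𝒴 → 𝒵)
    (hs : ∀ x y, 0 ≤ s x y)
    (F1 : ∀ x y z, (if w x y = z then s x y else 0) *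
        (∑ x', ∑ y', if w x' y' = z then s x' y' else 0) =
      (∑ y', if w x y' = z then s x y' else 0) * (∑ x', if w x' y = z then s x' y else 0)) :
    ∀ x y z, (if w x y = z then f x * g y * s x y else 0) *
        (∑ x', ∑ y', if w x' y' = z then f x' * g y' * s x' y' else 0) =
      (∑ y', if w x y' = z then f x * g y' * s x y' else 0) *
        (∑ x', if w x' y = z then f x' * g y * s x' y else 0) := by
  intro x y z
  set φ : 𝒳 → ℝ := fun x' => ∑ y', if w x' y' = z then s x' y' else 0 with hφ
  set ψ : 𝒴 → ℝ := fun y' => ∑ x', if w x' y' = z then s x' y' else 0 with hψ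
  set σ : ℝ := ∑ x', ∑ y', if w x' y' = z then s x' y' else 0 with hσdef
  by_cases hσ : σ = 0
  · -- everything in the fiber of z vanishes
    have hall : ∀ x' y', (if w x' y' = z then s x' y' else 0) = 0 := by
      intro x' y'
      have h1 := (Finset.sum_eq_zero_iff_of_nonneg (fun x' _ =>
        Finset.sum_nonneg fun y' _ => by
          by_cases hc : w x' y' = z
          · rw [if_pos hc]; exact hs x' y'
          · rw [if_neg hc])).1 hσ x' (Finset.mem_univ x')
      exact (Finset.sum_eq_zero_iff_of_nonneg (fun y' _ => by
        by_cases hc : w x' y' = z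
        · rw [if_pos hc]; exact hs x' y'
        · rw [if_neg hc])).1 h1 y' (Finset.mem_univ y')
    have hallr : ∀ x' y', (if w x' y' = z then f x' * g y' * s x' y' else 0) = 0 := by
      intro x' y'
      by_cases hc : w x' y' = z
      · have := hall x' y'
        rw [if_pos hc] at this
        rw [if_pos hc, this, mul_zero]
      · rw [if_neg hc]
    rw [hallr x y, zero_mul]
    rw [show (∑ y', if w x y' = z then f x * g y' * s x y' else 0) = 0 from
      Finset.sum_eq_zero fun y' _ => hallr x y', zero_mul]
  · -- multiply by σ² and use the product decomposition
    have e0 : ∀ x' y', (if w x' y' = z then f x' * g y' * s x' y' else 0) * σ =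
        f x' * g y' * (φ x' * ψ y') := by
      intro x' y'
      have hF := F1 x' y' z
      by_cases hc : w x' y' = z
      · rw [if_pos hc] at hF ⊢
        calc f x' * g y' * s x' y' * σ = f x' * g y' * (s x' y' * σ) := by ring
          _ = f x' * g y' * (φ x' * ψ y') := by rw [hF]
      · rw [if_neg hc] at hF ⊢
        rw [zero_mul] at hF ⊢
        rw [← hF]
        ring
    have ePxz : (∑ y', if w x y' = z then f x * g y' * s x y' else 0) * σ =
        f x * φ x * (∑ y', g y' * ψ y') := by
      rw [Finset.sum_mul]
      rw [show (∑ y', (if w x y' = z then f x * g y' * s x y' else 0) * σ) =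
          ∑ y', f x * g y' * (φ x * ψ y') from Finset.sum_congr rfl fun y' _ => e0 x y']
      rw [Finset.mul_sum]
      exact Finset.sum_congr rfl fun y' _ => by ring
    have ePyz : (∑ x', if w x' y = z then f x' * g y * s x' y else 0) * σ =
        g y * ψ y * (∑ x', f x' * φ x') := by
      rw [Finset.sum_mul]
      rw [show (∑ x', (if w x' y = z then f x' * g y * s x' y else 0) * σ) =
          ∑ x', f x' * g y * (φ x' * ψ y) from Finset.sum_congr rfl fun x' _ => e0 x' y]
      rw [Finset.mul_sum]
      exact Finset.sum_congr rfl fun x' _ => by ring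
    have eS : (∑ x', ∑ y', if w x' y' = z then f x' * g y' * s x' y' else 0) * σ =
        (∑ x', f x' * φ x') * (∑ y', g y' * ψ y') := by
      rw [Finset.sum_mul]
      rw [show (∑ x', (∑ y', if w x' y' = z then f x' * g y' * s x' y' else 0) * σ) =
          ∑ x', (f x' * φ x') * (∑ y', g y' * ψ y') from Finset.sum_congr rfl fun x' _ => by
        rw [Finset.sum_mul]
        rw [show (∑ y', (if w x' y' = z then f x' * g y' * s x' y' else 0) * σ) =
            ∑ y', f x' * g y' * (φ x' * ψ y') from Finset.sum_congr rfl fun y' _ => e0 x' y']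
        rw [Finset.mul_sum]
        exact Finset.sum_congr rfl fun y' _ => by ring]
      rw [Finset.sum_mul]
    have e1 : (if w x y = z then f x * g y * s x y else 0) * σ = f x * g y * (φ x * ψ y) :=
      e0 x y
    apply mul_right_cancel₀ (mul_ne_zero hσ hσ)
    calc (if w x y = z then f x * g y * s x y else 0) *
          (∑ x', ∑ y', if w x' y' = z then f x' * g y' * s x' y' else 0) * (σ * σ)
        = ((if w x y = z then f x * g y * s x y else 0) * σ) *
          ((∑ x', ∑ y', if w x' y' = z then f x' * g y' * s x' y' else 0) * σ) := by ring
      _ = (f x * g y * (φ x * ψ y)) * ((∑ x', f x' * φ x') * (∑ y', g y' * ψ y')) := by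
          rw [e1, eS]
      _ = (f x * φ x * (∑ y', g y' * ψ y')) * (g y * ψ y * (∑ x', f x' * φ x')) := by ring
      _ = ((∑ y', if w x y' = z then f x * g y' * s x y' else 0) * σ) *
          ((∑ x', if w x' y = z then f x' * g y * s x' y else 0) * σ) := by rw [ePxz, ePyz]
      _ = (∑ y', if w x y' = z then f x * g y' * s x y' else 0) *
          (∑ x', if w x' y = z then f x' * g y * s x' y else 0) * (σ * σ) := by ring

lemma sum_collapse {ι : Type*} [Fintype ι] [DecidableEq ι] (pt : ι) (p : ι → Prop)
    [DecidablePred p] (v : ι → ℝ) :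
    (∑ i, if i = pt ∧ p i then v i else 0) = if p pt then v pt else 0 := by
  rw [Finset.sum_congr rfl (fun i _ => by
    by_cases h1 : i = pt <;> by_cases h2 : p i <;> simp [h1, h2] :
    ∀ i ∈ Finset.univ, (if i = pt ∧ p i then v i else 0) =
      if i = pt then (if p i then v i else 0) else 0)]
  rw [Finset.sum_ite_eq' Finset.univ pt (fun i => if p i then v i else 0),
    if_pos (Finset.mem_univ _)]

end Transfer

/-- If a primitive `κ` fails the completeness condition, `Ã` and `B̃` are independent
(with arbitrary marginals), and `(Ũ,Ṽ)` is generated by one use of `κ` with inputs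
`(Ã,B̃)` and constant side information, then the pair `(⟨Ã,Ũ⟩, ⟨B̃,Ṽ⟩)` is trivial. -/
theorem stmt12 {Ω : Type*} [MeasurableSpace Ω] (μ : Measure Ω) [IsProbabilityMeasure μ]
    {𝒜 ℬ 𝒰 𝒱 : Type} [Fintype 𝒜] [Fintype ℬ] [Fintype 𝒰] [Fintype 𝒱]
    [Nonempty 𝒜] [Nonempty ℬ] [Nonempty 𝒰] [Nonempty 𝒱]
    (κ : 𝒜 × ℬ → PMF (𝒰 × 𝒱)) (hκ : FailsCompleteness κ)
    (A : Ω → 𝒜) (B : Ω → ℬ) (U : Ω → 𝒰) (V : Ω → 𝒱)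
    (hA : DiscreteRV A) (hB : DiscreteRV B) (hU : DiscreteRV U) (hV : DiscreteRV V)
    (hindep : ∀ (a : 𝒜) (b : ℬ),
      μ {ω | A ω = a ∧ B ω = b} = μ {ω | A ω = a} * μ {ω | B ω = b})
    (hgen : GeneratedBy μ κ A B U V (fun _ => ())) :
    IsTrivialPair μ (pair A U) (pair B V) := by
  classical
  -- ## Step 1: the canonical uniform-input instance
  set cE : ℝ≥0∞ := ((Fintype.card 𝒜 : ℝ≥0∞) * (Fintype.card ℬ : ℝ≥0∞))⁻¹ with hcE
  have hcardA : (Fintype.card 𝒜 : ℝ≥0∞) ≠ 0 := by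
    simp [Fintype.card_ne_zero]
  have hcardB : (Fintype.card ℬ : ℝ≥0∞) ≠ 0 := by
    simp [Fintype.card_ne_zero]
  have hcardAB : (Fintype.card 𝒜 : ℝ≥0∞) * (Fintype.card ℬ : ℝ≥0∞) ≠ 0 :=
    mul_ne_zero hcardA hcardB
  have hcardABtop : (Fintype.card 𝒜 : ℝ≥0∞) * (Fintype.card ℬ : ℝ≥0∞) ≠ ⊤ :=
    ENNReal.mul_ne_top (ENNReal.natCast_ne_top _) (ENNReal.natCast_ne_top _)
  have hcEne0 : cE ≠ 0 := ENNReal.inv_ne_zero.2 hcardABtop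
  have hcEtop : cE ≠ ⊤ := ENNReal.inv_ne_top.2 hcardAB
  have hκsum : ∀ ab : 𝒜 × ℬ, (∑ uv : 𝒰 × 𝒱, κ ab uv) = 1 := fun ab => by
    rw [← tsum_fintype (L := SummationFilter.unconditional _)]; exact (κ ab).tsum_coe
  have hq1 : (∑ ω' : (𝒜 × ℬ) × (𝒰 × 𝒱), cE * κ ω'.1 ω'.2) = 1 := by
    rw [Fintype.sum_prod_type]
    rw [Finset.sum_congr rfl (fun ab _ => by rw [← Finset.mul_sum, hκsum ab, mul_one] :
      ∀ ab ∈ Finset.univ, (∑ uv : 𝒰 × 𝒱, cE * κ ab uv) = cE)]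
    rw [Finset.sum_const, Finset.card_univ, Fintype.card_prod, nsmul_eq_mul, Nat.cast_mul]
    exact ENNReal.mul_inv_cancel hcardAB hcardABtop
  let q : PMF ((𝒜 × ℬ) × (𝒰 × 𝒱)) := PMF.ofFintype (fun ω' => cE * κ ω'.1 ω'.2) hq1
  letI m' : MeasurableSpace ((𝒜 × ℬ) × (𝒰 × 𝒱)) := ⊤
  haveI hms : MeasurableSingletonClass ((𝒜 × ℬ) × (𝒰 × 𝒱)) :=
    ⟨fun _ => MeasurableSpace.measurableSet_top⟩
  set μ' : Measure ((𝒜 × ℬ) × (𝒰 × 𝒱)) := q.toMeasure with hμ'def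
  haveI : IsProbabilityMeasure μ' := PMF.toMeasure.isProbabilityMeasure q
  set A' : ((𝒜 × ℬ) × (𝒰 × 𝒱)) → 𝒜 := fun ω' => ω'.1.1 with hA'
  set B' : ((𝒜 × ℬ) × (𝒰 × 𝒱)) → ℬ := fun ω' => ω'.1.2 with hB'
  set U' : ((𝒜 × ℬ) × (𝒰 × 𝒱)) → 𝒰 := fun ω' => ω'.2.1 with hU'
  set V' : ((𝒜 × ℬ) × (𝒰 × 𝒱)) → 𝒱 := fun ω' => ω'.2.2 with hV'
  have hμ'e : ∀ S : Set ((𝒜 × ℬ) × (𝒰 × 𝒱)),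
      μ' S = ∑ ω', if ω' ∈ S then cE * κ ω'.1 ω'.2 else 0 := by
    intro S
    rw [hμ'def, PMF.toMeasure_apply_fintype]
    refine Finset.sum_congr rfl fun ω' _ => ?_
    rw [Set.indicator_apply]
    by_cases h : ω' ∈ S
    · rw [if_pos h, if_pos h, PMF.ofFintype_apply]
    · rw [if_neg h, if_neg h]
  -- uniform marginal on inputs
  have hABset : ∀ (a : 𝒜) (b : ℬ) (S : Set ((𝒜 × ℬ) × (𝒰 × 𝒱))),
      (∀ ω', ω' ∈ S ↔ (ω'.1.1 = a ∧ ω'.1.2 = b)) → μ' S = cE := by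
    intro a b S hS
    rw [hμ'e S]
    rw [Fintype.sum_prod_type]
    have inner : ∀ ab : 𝒜 × ℬ,
        (∑ uv : 𝒰 × 𝒱, if (ab, uv) ∈ S then cE * κ (ab, uv).1 (ab, uv).2 else 0) =
        if ab = (a, b) then cE else 0 := by
      intro ab
      by_cases hc : ab = (a, b)
      · rw [if_pos hc]
        have hmem : ∀ uv : 𝒰 × 𝒱, (ab, uv) ∈ S := fun uv =>
          (hS (ab, uv)).2 (by rw [hc]; exact ⟨rfl, rfl⟩)
        rw [Finset.sum_congr rfl (fun uv _ => if_pos (hmem uv))]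
        rw [← Finset.mul_sum, hκsum ab, mul_one]
      · rw [if_neg hc]
        refine Finset.sum_eq_zero fun uv _ => ?_
        rw [if_neg]
        intro hmem
        exact hc (Prod.ext ((hS (ab, uv)).1 hmem).1 ((hS (ab, uv)).1 hmem).2)
    rw [Finset.sum_congr rfl fun ab _ => inner ab]
    rw [Finset.sum_ite_eq' Finset.univ (a, b) (fun _ => cE), if_pos (Finset.mem_univ _)]
  have hunif : ∀ (a : 𝒜) (b : ℬ), μ' {ω' | A' ω' = a ∧ B' ω' = b} =
      ((Nat.card 𝒜 : ℝ≥0∞) * (Nat.card ℬ : ℝ≥0∞))⁻¹ := by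
    intro a b
    rw [show μ' {ω' | A' ω' = a ∧ B' ω' = b} = cE from hABset a b _ (fun ω' => Iff.rfl)]
    rw [hcE, Nat.card_eq_fintype_card, Nat.card_eq_fintype_card]
  -- generated by κ
  have hpoint : ∀ (pt : (𝒜 × ℬ) × (𝒰 × 𝒱)) (S : Set ((𝒜 × ℬ) × (𝒰 × 𝒱))),
      (∀ ω', ω' ∈ S ↔ ω' = pt) → μ' S = cE * κ pt.1 pt.2 := by
    intro pt S hS
    rw [hμ'e S]
    rw [Finset.sum_congr rfl (fun ω' _ => by
      by_cases hc : ω' = pt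
      · rw [if_pos ((hS ω').2 hc), hc, if_pos rfl]
      · rw [if_neg (fun hmem => hc ((hS ω').1 hmem))]
        rw [if_neg hc] :
      ∀ ω' ∈ Finset.univ, (if ω' ∈ S then cE * κ ω'.1 ω'.2 else 0) =
        if ω' = pt then cE * κ pt.1 pt.2 else 0)]
    rw [Finset.sum_ite_eq' Finset.univ pt (fun _ => cE * κ pt.1 pt.2),
      if_pos (Finset.mem_univ _)]
  have hgen' : GeneratedBy μ' κ A' B' U' V' (fun _ => ()) := by
    intro t a b u v
    have h1 : μ' {ω' | (fun _ => ()) ω' = t ∧ A' ω' = a ∧ B' ω' = b ∧ U' ω' = u ∧ V' ω' = v} =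
        cE * κ ((a, b), (u, v)).1 ((a, b), (u, v)).2 := by
      apply hpoint
      intro ω'
      simp only [Set.mem_setOf_eq, eq_iff_true_of_subsingleton, true_and, hA', hB', hU', hV']
      constructor
      · rintro ⟨h1, h2, h3, h4⟩
        exact Prod.ext (Prod.ext h1 h2) (Prod.ext h3 h4)
      · rintro rfl
        exact ⟨rfl, rfl, rfl, rfl⟩
    have h2 : μ' {ω' | (fun _ => ()) ω' = t ∧ A' ω' = a ∧ B' ω' = b} = cE := by
      apply hABset a b
      intro ω'
      simp only [Set.mem_setOf_eq, eq_iff_true_of_subsingleton, true_and, hA', hB']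
    rw [h1, h2]
  -- apply failure of completeness
  obtain ⟨𝒵, i𝒵, Z0, hZ0d, hc1, hc2, hc3⟩ := hκ ((𝒜 × ℬ) × (𝒰 × 𝒱)) m' μ' ‹_› A' B' U' V'
    (fun _ => MeasurableSpace.measurableSet_top) (fun _ => MeasurableSpace.measurableSet_top)
    (fun _ => MeasurableSpace.measurableSet_top) (fun _ => MeasurableSpace.measurableSet_top)
    hunif hgen'
  -- ## Step 2: factorizations under the uniform measure
  set sfun : (𝒜 × 𝒰) → (ℬ × 𝒱) → ℝ := fun x y => (cE * κ (x.1, y.1) (x.2, y.2)).toReal with hsfun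
  set w : (𝒜 × 𝒰) → (ℬ × 𝒱) → 𝒵 := fun x y => Z0 ((x.1, y.1), (x.2, y.2)) with hw
  have hsnn : ∀ x y, 0 ≤ sfun x y := fun _ _ => ENNReal.toReal_nonneg
  have hκtop : ∀ (ab : 𝒜 × ℬ) (uv : 𝒰 × 𝒱), κ ab uv ≠ ⊤ :=
    fun ab uv => ne_top_of_le_ne_top ENNReal.one_ne_top ((κ ab).coe_le_one uv)
  have hreindex : ∀ F : ((𝒜 × ℬ) × (𝒰 × 𝒱)) → ℝ, (∑ ω', F ω') =
      ∑ x : 𝒜 × 𝒰, ∑ y : ℬ × 𝒱, F ((x.1, y.1), (x.2, y.2)) := by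
    intro F
    simp only [Fintype.sum_prod_type]
    exact Finset.sum_congr rfl fun a _ => Finset.sum_comm
  have hμ'R : ∀ S : Set ((𝒜 × ℬ) × (𝒰 × 𝒱)), (μ' S).toReal =
      ∑ x : 𝒜 × 𝒰, ∑ y : ℬ × 𝒱, if ((x.1, y.1), (x.2, y.2)) ∈ S then sfun x y else 0 := by
    intro S
    rw [hμ'e S, ENNReal.toReal_sum (fun ω' _ => by
      by_cases h : ω' ∈ S
      · rw [if_pos h]; exact ENNReal.mul_ne_top hcEtop (hκtop _ _)
      · rw [if_neg h]; exact ENNReal.zero_ne_top)]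
    rw [Finset.sum_congr rfl (fun ω' _ => by
      by_cases h : ω' ∈ S
      · rw [if_pos h, if_pos h]
      · rw [if_neg h, if_neg h]; exact ENNReal.toReal_zero :
      ∀ ω' ∈ Finset.univ, ((if ω' ∈ S then cE * κ ω'.1 ω'.2 else 0) : ℝ≥0∞).toReal =
        if ω' ∈ S then (cE * κ ω'.1 ω'.2).toReal else 0)]
    rw [hreindex (fun ω' => if ω' ∈ S then (cE * κ ω'.1 ω'.2).toReal else 0)]
  -- probability formulas under μ'
  have hq3 : ∀ (x : 𝒜 × 𝒰) (y : ℬ × 𝒱) (z : 𝒵),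
      (μ' ((pair A' U') ⁻¹' {x} ∩ (pair B' V') ⁻¹' {y} ∩ Z0 ⁻¹' {z})).toReal =
        if w x y = z then sfun x y else 0 := by
    intro x y z
    rw [hμ'R]
    trans (∑ x' : 𝒜 × 𝒰, ∑ y' : ℬ × 𝒱, if y' = y ∧ (x' = x ∧ w x' y' = z) then sfun x' y' else 0)
    · refine Finset.sum_congr rfl fun x' _ => Finset.sum_congr rfl fun y' _ => ?_
      have hiff : (((x'.1, y'.1), (x'.2, y'.2)) ∈ ((pair A' U') ⁻¹' {x} ∩ (pair B' V') ⁻¹' {y} ∩ Z0 ⁻¹' {z})) ↔ (y' = y ∧ (x' = x ∧ w x' y' = z)) := by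
        simp only [Set.mem_inter_iff, Set.mem_preimage, Set.mem_singleton_iff, pair,
          hA', hB', hU', hV', hw, Prod.ext_iff]
        try tauto
      by_cases h : y' = y ∧ (x' = x ∧ w x' y' = z)
      · rw [if_pos h, if_pos (hiff.2 h)]
      · rw [if_neg h, if_neg (fun hm => h (hiff.1 hm))]
    trans (∑ x' : 𝒜 × 𝒰, if x' = x ∧ w x' y = z then sfun x' y else 0)
    · exact Finset.sum_congr rfl fun x' _ =>
        sum_collapse y (fun y' => x' = x ∧ w x' y' = z) (fun y' => sfun x' y')
    exact sum_collapse x (fun x' => w x' y = z) (fun x' => sfun x' y)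
  have hqxz : ∀ (x : 𝒜 × 𝒰) (z : 𝒵),
      (μ' ((pair A' U') ⁻¹' {x} ∩ Z0 ⁻¹' {z})).toReal =
        ∑ y', if w x y' = z then sfun x y' else 0 := by
    intro x z
    rw [hμ'R]
    trans (∑ x' : 𝒜 × 𝒰, ∑ y' : ℬ × 𝒱, if x' = x ∧ w x' y' = z then sfun x' y' else 0)
    · refine Finset.sum_congr rfl fun x' _ => Finset.sum_congr rfl fun y' _ => ?_
      have hiff : (((x'.1, y'.1), (x'.2, y'.2)) ∈ ((pair A' U') ⁻¹' {x} ∩ Z0 ⁻¹' {z})) ↔ (x' = x ∧ w x' y' = z) := by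
        simp only [Set.mem_inter_iff, Set.mem_preimage, Set.mem_singleton_iff, pair,
          hA', hB', hU', hV', hw, Prod.ext_iff]
        try tauto
      by_cases h : x' = x ∧ w x' y' = z
      · rw [if_pos h, if_pos (hiff.2 h)]
      · rw [if_neg h, if_neg (fun hm => h (hiff.1 hm))]
    trans (∑ y' : ℬ × 𝒱, ∑ x' : 𝒜 × 𝒰, if x' = x ∧ w x' y' = z then sfun x' y' else 0)
    · exact Finset.sum_comm
    exact Finset.sum_congr rfl fun y' _ =>
      sum_collapse x (fun x' => w x' y' = z) (fun x' => sfun x' y')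
  have hqyz : ∀ (y : ℬ × 𝒱) (z : 𝒵),
      (μ' ((pair B' V') ⁻¹' {y} ∩ Z0 ⁻¹' {z})).toReal =
        ∑ x', if w x' y = z then sfun x' y else 0 := by
    intro y z
    rw [hμ'R]
    trans (∑ x' : 𝒜 × 𝒰, ∑ y' : ℬ × 𝒱, if y' = y ∧ w x' y' = z then sfun x' y' else 0)
    · refine Finset.sum_congr rfl fun x' _ => Finset.sum_congr rfl fun y' _ => ?_
      have hiff : (((x'.1, y'.1), (x'.2, y'.2)) ∈ ((pair B' V') ⁻¹' {y} ∩ Z0 ⁻¹' {z})) ↔ (y' = y ∧ w x' y' = z) := by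
        simp only [Set.mem_inter_iff, Set.mem_preimage, Set.mem_singleton_iff, pair,
          hA', hB', hU', hV', hw, Prod.ext_iff]
        try tauto
      by_cases h : y' = y ∧ w x' y' = z
      · rw [if_pos h, if_pos (hiff.2 h)]
      · rw [if_neg h, if_neg (fun hm => h (hiff.1 hm))]
    exact Finset.sum_congr rfl fun x' _ =>
      sum_collapse y (fun y' => w x' y' = z) (fun y' => sfun x' y')
  have hqz : ∀ z : 𝒵, (μ' (Z0 ⁻¹' {z})).toReal =
      ∑ x', ∑ y', if w x' y' = z then sfun x' y' else 0 := by
    intro z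
    rw [hμ'R]
    trans (∑ x' : 𝒜 × 𝒰, ∑ y' : ℬ × 𝒱, if w x' y' = z then sfun x' y' else 0)
    · refine Finset.sum_congr rfl fun x' _ => Finset.sum_congr rfl fun y' _ => ?_
      have hiff : (((x'.1, y'.1), (x'.2, y'.2)) ∈ (Z0 ⁻¹' {z})) ↔ (w x' y' = z) := by
        simp only [Set.mem_preimage, Set.mem_singleton_iff, hw]
      by_cases h : w x' y' = z
      · rw [if_pos h, if_pos (hiff.2 h)]
      · rw [if_neg h, if_neg (fun hm => h (hiff.1 hm))]
    rfl
  have hqxy : ∀ (x : 𝒜 × 𝒰) (y : ℬ × 𝒱),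
      (μ' ((pair A' U') ⁻¹' {x} ∩ (pair B' V') ⁻¹' {y})).toReal = sfun x y := by
    intro x y
    rw [hμ'R]
    trans (∑ x' : 𝒜 × 𝒰, ∑ y' : ℬ × 𝒱, if y' = y ∧ x' = x then sfun x' y' else 0)
    · refine Finset.sum_congr rfl fun x' _ => Finset.sum_congr rfl fun y' _ => ?_
      have hiff : (((x'.1, y'.1), (x'.2, y'.2)) ∈ ((pair A' U') ⁻¹' {x} ∩ (pair B' V') ⁻¹' {y})) ↔ (y' = y ∧ x' = x) := by
        simp only [Set.mem_inter_iff, Set.mem_preimage, Set.mem_singleton_iff, pair,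
          hA', hB', hU', hV', Prod.ext_iff]
        try tauto
      by_cases h : y' = y ∧ x' = x
      · rw [if_pos h, if_pos (hiff.2 h)]
      · rw [if_neg h, if_neg (fun hm => h (hiff.1 hm))]
    trans (∑ x' : 𝒜 × 𝒰, if x' = x then sfun x' y else 0)
    · exact Finset.sum_congr rfl fun x' _ =>
        sum_collapse y (fun _ => x' = x) (fun y' => sfun x' y')
    rw [Finset.sum_ite_eq' Finset.univ x (fun x' => sfun x' y), if_pos (Finset.mem_univ _)]
  have hqx : ∀ x : 𝒜 × 𝒰, (μ' ((pair A' U') ⁻¹' {x})).toReal = ∑ y', sfun x y' := by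
    intro x
    rw [hμ'R]
    trans (∑ x' : 𝒜 × 𝒰, ∑ y' : ℬ × 𝒱, if x' = x then sfun x' y' else 0)
    · refine Finset.sum_congr rfl fun x' _ => Finset.sum_congr rfl fun y' _ => ?_
      have hiff : (((x'.1, y'.1), (x'.2, y'.2)) ∈ ((pair A' U') ⁻¹' {x})) ↔ (x' = x) := by
        simp only [Set.mem_preimage, Set.mem_singleton_iff, pair, hA', hU', Prod.ext_iff]
        try tauto
      by_cases h : x' = x
      · rw [if_pos h, if_pos (hiff.2 h)]
      · rw [if_neg h, if_neg (fun hm => h (hiff.1 hm))]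
    trans (∑ y' : ℬ × 𝒱, ∑ x' : 𝒜 × 𝒰, if x' = x then sfun x' y' else 0)
    · exact Finset.sum_comm
    exact Finset.sum_congr rfl fun y' _ => by
      rw [Finset.sum_ite_eq' Finset.univ x (fun x' => sfun x' y'), if_pos (Finset.mem_univ _)]
  have hqy : ∀ y : ℬ × 𝒱, (μ' ((pair B' V') ⁻¹' {y})).toReal = ∑ x', sfun x' y := by
    intro y
    rw [hμ'R]
    trans (∑ x' : 𝒜 × 𝒰, ∑ y' : ℬ × 𝒱, if y' = y then sfun x' y' else 0)
    · refine Finset.sum_congr rfl fun x' _ => Finset.sum_congr rfl fun y' _ => ?_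
      have hiff : (((x'.1, y'.1), (x'.2, y'.2)) ∈ ((pair B' V') ⁻¹' {y})) ↔ (y' = y) := by
        simp only [Set.mem_preimage, Set.mem_singleton_iff, pair, hB', hV', Prod.ext_iff]
        try tauto
      by_cases h : y' = y
      · rw [if_pos h, if_pos (hiff.2 h)]
      · rw [if_neg h, if_neg (fun hm => h (hiff.1 hm))]
    exact Finset.sum_congr rfl fun x' _ => by
      rw [Finset.sum_ite_eq' Finset.univ y (fun y' => sfun x' y'), if_pos (Finset.mem_univ _)]
  -- factorizations from the three cmi conditions
  have dd1 : DiscreteRV (pair A' U') := fun _ => MeasurableSpace.measurableSet_top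
  have dd2 : DiscreteRV (pair B' V') := fun _ => MeasurableSpace.measurableSet_top
  have dd3 : DiscreteRV Z0 := fun _ => MeasurableSpace.measurableSet_top
  have hF1 := (cmi_eq_zero_iff μ' dd1 dd2 dd3).1 hc1
  have hF2 := (cmi_eq_zero_iff μ' dd3 dd1 dd2).1 hc2
  have hF3 := (cmi_eq_zero_iff μ' dd3 dd2 dd1).1 hc3
  have F1 : ∀ x y z, (if w x y = z then sfun x y else 0) *
      (∑ x', ∑ y', if w x' y' = z then sfun x' y' else 0) =
    (∑ y', if w x y' = z then sfun x y' else 0) *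
      (∑ x', if w x' y = z then sfun x' y else 0) := by
    intro x y z
    have h := hF1 x y z
    rwa [hq3, hqz, hqxz, hqyz] at h
  have F2 : ∀ x y z, (if w x y = z then sfun x y else 0) * (∑ x', sfun x' y) =
      (∑ x', if w x' y = z then sfun x' y else 0) * sfun x y := by
    intro x y z
    have h := hF2 z x y
    have e1 : Z0 ⁻¹' {z} ∩ (pair A' U') ⁻¹' {x} ∩ (pair B' V') ⁻¹' {y} =
        (pair A' U') ⁻¹' {x} ∩ (pair B' V') ⁻¹' {y} ∩ Z0 ⁻¹' {z} := by
      ext ω'; simp only [Set.mem_inter_iff]; tauto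
    have e2 : Z0 ⁻¹' {z} ∩ (pair B' V') ⁻¹' {y} = (pair B' V') ⁻¹' {y} ∩ Z0 ⁻¹' {z} :=
      Set.inter_comm _ _
    rw [e1, e2] at h
    rwa [hq3, hqy, hqyz, hqxy] at h
  have F3 : ∀ x y z, (if w x y = z then sfun x y else 0) * (∑ y', sfun x y') =
      (∑ y', if w x y' = z then sfun x y' else 0) * sfun x y := by
    intro x y z
    have h := hF3 z y x
    have e1 : Z0 ⁻¹' {z} ∩ (pair B' V') ⁻¹' {y} ∩ (pair A' U') ⁻¹' {x} =
        (pair A' U') ⁻¹' {x} ∩ (pair B' V') ⁻¹' {y} ∩ Z0 ⁻¹' {z} := by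
      ext ω'; simp only [Set.mem_inter_iff]; tauto
    have e2 : Z0 ⁻¹' {z} ∩ (pair A' U') ⁻¹' {x} = (pair A' U') ⁻¹' {x} ∩ Z0 ⁻¹' {z} :=
      Set.inter_comm _ _
    have e3 : (pair B' V') ⁻¹' {y} ∩ (pair A' U') ⁻¹' {x} =
        (pair A' U') ⁻¹' {x} ∩ (pair B' V') ⁻¹' {y} := Set.inter_comm _ _
    rw [e1, e2, e3] at h
    rwa [hq3, hqx, hqxz, hqxy] at h
  -- ## Step 3: transfer to the original space
  set cr : ℝ := cE.toReal with hcr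
  have hcrpos : 0 < cr := ENNReal.toReal_pos hcEne0 hcEtop
  set f : (𝒜 × 𝒰) → ℝ := fun x => (μ (A ⁻¹' {x.1})).toReal * cr⁻¹ with hf
  set g : (ℬ × 𝒱) → ℝ := fun y => (μ (B ⁻¹' {y.1})).toReal with hgdef
  set Zf : Ω → 𝒵 := fun ω => Z0 ((A ω, B ω), (U ω, V ω)) with hZf
  -- measurability
  have hXd : DiscreteRV (pair A U) := by
    intro x
    have hset : (pair A U) ⁻¹' {x} = A ⁻¹' {x.1} ∩ U ⁻¹' {x.2} := by
      ext ω; simp [pair, Prod.ext_iff]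
    rw [hset]; exact (hA _).inter (hU _)
  have hYd : DiscreteRV (pair B V) := by
    intro y
    have hset : (pair B V) ⁻¹' {y} = B ⁻¹' {y.1} ∩ V ⁻¹' {y.2} := by
      ext ω; simp [pair, Prod.ext_iff]
    rw [hset]; exact (hB _).inter (hV _)
  have hJd : ∀ p : (𝒜 × ℬ) × (𝒰 × 𝒱),
      MeasurableSet ((fun ω => ((A ω, B ω), (U ω, V ω))) ⁻¹' {p}) := by
    intro p
    have hset : (fun ω => ((A ω, B ω), (U ω, V ω))) ⁻¹' {p} =
        A ⁻¹' {p.1.1} ∩ B ⁻¹' {p.1.2} ∩ U ⁻¹' {p.2.1} ∩ V ⁻¹' {p.2.2} := by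
      ext ω
      simp only [Set.mem_preimage, Set.mem_singleton_iff, Set.mem_inter_iff, Prod.ext_iff]
      tauto
    rw [hset]
    exact (((hA _).inter (hB _)).inter (hU _)).inter (hV _)
  have hZd : DiscreteRV Zf := by
    intro z
    have hset : Zf ⁻¹' {z} =
        ⋃ p ∈ Finset.univ.filter (fun p : (𝒜 × ℬ) × (𝒰 × 𝒱) => Z0 p = z),
          (fun ω => ((A ω, B ω), (U ω, V ω))) ⁻¹' {p} := by
      ext ω
      simp only [Set.mem_iUnion, Set.mem_preimage, Set.mem_singleton_iff, Finset.mem_filter,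
        Finset.mem_univ, true_and, hZf]
      constructor
      · intro h; exact ⟨((A ω, B ω), (U ω, V ω)), h, rfl⟩
      · rintro ⟨p, hp, rfl⟩; exact hp
    rw [hset]
    exact (Finset.univ.filter _).measurableSet_biUnion (fun p _ => hJd p)
  -- probability formulas under μ
  have hXY : ∀ (x : 𝒜 × 𝒰) (y : ℬ × 𝒱),
      μ ((pair A U) ⁻¹' {x} ∩ (pair B V) ⁻¹' {y}) =
        μ (A ⁻¹' {x.1}) * μ (B ⁻¹' {y.1}) * κ (x.1, y.1) (x.2, y.2) := by
    intro x y
    have h := hgen () x.1 y.1 x.2 y.2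
    have hset1 : {ω | (fun _ => ()) ω = () ∧ A ω = x.1 ∧ B ω = y.1 ∧ U ω = x.2 ∧ V ω = y.2} =
        (pair A U) ⁻¹' {x} ∩ (pair B V) ⁻¹' {y} := by
      ext ω
      simp only [Set.mem_setOf_eq, Set.mem_inter_iff, Set.mem_preimage,
        Set.mem_singleton_iff, pair, Prod.ext_iff, eq_iff_true_of_subsingleton, true_and]
      tauto
    have hset2 : {ω | (fun _ => ()) ω = () ∧ A ω = x.1 ∧ B ω = y.1} =
        {ω | A ω = x.1 ∧ B ω = y.1} := by
      ext ω
      simp only [Set.mem_setOf_eq, eq_iff_true_of_subsingleton, true_and]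
    rw [hset1, hset2] at h
    rw [h, hindep x.1 y.1]
    have e1 : {ω | A ω = x.1} = A ⁻¹' {x.1} := by ext ω; simp
    have e2 : {ω | B ω = y.1} = B ⁻¹' {y.1} := by ext ω; simp
    rw [e1, e2]
  have hXYr : ∀ (x : 𝒜 × 𝒰) (y : ℬ × 𝒱),
      (μ ((pair A U) ⁻¹' {x} ∩ (pair B V) ⁻¹' {y})).toReal = f x * g y * sfun x y := by
    intro x y
    rw [hXY x y, ENNReal.toReal_mul, ENNReal.toReal_mul]
    rw [hf, hgdef, hsfun]
    simp only []
    rw [ENNReal.toReal_mul, ← hcr]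
    field_simp
  have hXYZr : ∀ (x : 𝒜 × 𝒰) (y : ℬ × 𝒱) (z : 𝒵),
      (μ ((pair A U) ⁻¹' {x} ∩ (pair B V) ⁻¹' {y} ∩ Zf ⁻¹' {z})).toReal =
        if w x y = z then f x * g y * sfun x y else 0 := by
    intro x y z
    have hZval : ∀ ω, pair A U ω = x → pair B V ω = y → Zf ω = w x y := by
      intro ω h1 h2
      have e1 : A ω = x.1 := congrArg Prod.fst h1
      have e2 : U ω = x.2 := congrArg Prod.snd h1
      have e3 : B ω = y.1 := congrArg Prod.fst h2
      have e4 : V ω = y.2 := congrArg Prod.snd h2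
      rw [hZf, hw]
      simp only []
      rw [e1, e2, e3, e4]
    by_cases hc : w x y = z
    · have hset : (pair A U) ⁻¹' {x} ∩ (pair B V) ⁻¹' {y} ∩ Zf ⁻¹' {z} =
          (pair A U) ⁻¹' {x} ∩ (pair B V) ⁻¹' {y} := by
        apply Set.Subset.antisymm Set.inter_subset_left
        intro ω hω
        refine ⟨hω, ?_⟩
        simp only [Set.mem_inter_iff, Set.mem_preimage, Set.mem_singleton_iff] at hω ⊢
        rw [hZval ω hω.1 hω.2]
        exact hc
      rw [hset, if_pos hc, hXYr]
    · have hset : (pair A U) ⁻¹' {x} ∩ (pair B V) ⁻¹' {y} ∩ Zf ⁻¹' {z} = ∅ := by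
        apply Set.eq_empty_iff_forall_notMem.2
        intro ω hω
        simp only [Set.mem_inter_iff, Set.mem_preimage, Set.mem_singleton_iff] at hω
        exact hc ((hZval ω hω.1.1 hω.1.2) ▸ hω.2)
      rw [hset, if_neg hc]
      simp
  have hXZr : ∀ (x : 𝒜 × 𝒰) (z : 𝒵),
      (μ ((pair A U) ⁻¹' {x} ∩ Zf ⁻¹' {z})).toReal =
        ∑ y', if w x y' = z then f x * g y' * sfun x y' else 0 := by
    intro x z
    rw [measure_eq_sum_inter μ hYd ((hXd x).inter (hZd z)),
      ENNReal.toReal_sum (fun _ _ => measure_ne_top μ _)]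
    refine Finset.sum_congr rfl fun y' _ => ?_
    have hset : (pair A U) ⁻¹' {x} ∩ Zf ⁻¹' {z} ∩ (pair B V) ⁻¹' {y'} =
        (pair A U) ⁻¹' {x} ∩ (pair B V) ⁻¹' {y'} ∩ Zf ⁻¹' {z} := by
      ext ω; simp only [Set.mem_inter_iff]; tauto
    rw [hset, hXYZr]
  have hYZr : ∀ (y : ℬ × 𝒱) (z : 𝒵),
      (μ ((pair B V) ⁻¹' {y} ∩ Zf ⁻¹' {z})).toReal =
        ∑ x', if w x' y = z then f x' * g y * sfun x' y else 0 := by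
    intro y z
    rw [measure_eq_sum_inter μ hXd ((hYd y).inter (hZd z)),
      ENNReal.toReal_sum (fun _ _ => measure_ne_top μ _)]
    refine Finset.sum_congr rfl fun x' _ => ?_
    have hset : (pair B V) ⁻¹' {y} ∩ Zf ⁻¹' {z} ∩ (pair A U) ⁻¹' {x'} =
        (pair A U) ⁻¹' {x'} ∩ (pair B V) ⁻¹' {y} ∩ Zf ⁻¹' {z} := by
      ext ω; simp only [Set.mem_inter_iff]; tauto
    rw [hset, hXYZr]
  have hZr : ∀ z : 𝒵, (μ (Zf ⁻¹' {z})).toReal =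
      ∑ x', ∑ y', if w x' y' = z then f x' * g y' * sfun x' y' else 0 := by
    intro z
    rw [measure_eq_sum_inter μ hXd (hZd z),
      ENNReal.toReal_sum (fun _ _ => measure_ne_top μ _)]
    refine Finset.sum_congr rfl fun x' _ => ?_
    rw [measure_eq_sum_inter μ hYd ((hZd z).inter (hXd x')),
      ENNReal.toReal_sum (fun _ _ => measure_ne_top μ _)]
    refine Finset.sum_congr rfl fun y' _ => ?_
    have hset : Zf ⁻¹' {z} ∩ (pair A U) ⁻¹' {x'} ∩ (pair B V) ⁻¹' {y'} =
        (pair A U) ⁻¹' {x'} ∩ (pair B V) ⁻¹' {y'} ∩ Zf ⁻¹' {z} := by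
      ext ω; simp only [Set.mem_inter_iff]; tauto
    rw [hset, hXYZr]
  have hXr : ∀ x : 𝒜 × 𝒰, (μ ((pair A U) ⁻¹' {x})).toReal = ∑ y', f x * g y' * sfun x y' := by
    intro x
    rw [measure_eq_sum_inter μ hYd (hXd x),
      ENNReal.toReal_sum (fun _ _ => measure_ne_top μ _)]
    exact Finset.sum_congr rfl fun y' _ => hXYr x y'
  have hYr : ∀ y : ℬ × 𝒱, (μ ((pair B V) ⁻¹' {y})).toReal = ∑ x', f x' * g y * sfun x' y := by
    intro y
    rw [measure_eq_sum_inter μ hXd (hYd y),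
      ENNReal.toReal_sum (fun _ _ => measure_ne_top μ _)]
    refine Finset.sum_congr rfl fun x' _ => ?_
    rw [Set.inter_comm, hXYr]
  -- transfer the factorizations
  have T1 := transferT1 sfun f g w hsnn F1
  have T2 := transferT2 sfun f g w hsnn F2
  have T3 := transferT3 sfun f g w hsnn F3
  -- conclude
  refine ⟨𝒵, i𝒵, Zf, hZd, ?_, ?_, ?_⟩
  · refine (cmi_eq_zero_iff μ hXd hYd hZd).2 ?_
    intro x y z
    rw [hXYZr, hZr, hXZr, hYZr]
    exact T1 x y z
  · refine (cmi_eq_zero_iff μ hZd hXd hYd).2 ?_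
    intro z x y
    have e1 : Zf ⁻¹' {z} ∩ (pair A U) ⁻¹' {x} ∩ (pair B V) ⁻¹' {y} =
        (pair A U) ⁻¹' {x} ∩ (pair B V) ⁻¹' {y} ∩ Zf ⁻¹' {z} := by
      ext ω; simp only [Set.mem_inter_iff]; tauto
    have e2 : Zf ⁻¹' {z} ∩ (pair B V) ⁻¹' {y} = (pair B V) ⁻¹' {y} ∩ Zf ⁻¹' {z} :=
      Set.inter_comm _ _
    rw [e1, e2, hXYZr, hYr, hYZr, hXYr]
    exact T2 x y z
  · refine (cmi_eq_zero_iff μ hZd hYd hXd).2 ?_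
    intro z y x
    have e1 : Zf ⁻¹' {z} ∩ (pair B V) ⁻¹' {y} ∩ (pair A U) ⁻¹' {x} =
        (pair A U) ⁻¹' {x} ∩ (pair B V) ⁻¹' {y} ∩ Zf ⁻¹' {z} := by
      ext ω; simp only [Set.mem_inter_iff]; tauto
    have e2 : Zf ⁻¹' {z} ∩ (pair A U) ⁻¹' {x} = (pair A U) ⁻¹' {x} ∩ Zf ⁻¹' {z} :=
      Set.inter_comm _ _
    have e3 : (pair B V) ⁻¹' {y} ∩ (pair A U) ⁻¹' {x} =
        (pair A U) ⁻¹' {x} ∩ (pair B V) ⁻¹' {y} := Set.inter_comm _ _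
    rw [e1, e2, e3, hXYZr, hXr, hXZr, hXYr]
    exact T3 x y z

end SecureComputation
end

section
/- Let X and Y be finite-valued random variables on a probability space. Then there exists a common part W of (X,Y); moreover, W may be taken to be φ ∘ X where φ maps each x in the range of X to the connected component of the bipartite graph on the ranges of X and Y with an edge between x and y whenever P(X = x ∧ Y = y) > 0. -/
open MeasureTheory Real
open scoped ENNReal

namespace SecureComputation

variable {Ω : Type*} [MeasurableSpace Ω]

/-- `W` is a common part of the pair `(X,Y)`: it is almost surely a function of `X` alone
and of `Y` alone, and any finite-valued random variable with this property is almost surely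
a function of `W`. -/
def IsCommonPart {𝒳 𝒴 𝒲 : Type*} (μ : Measure Ω) (X : Ω → 𝒳) (Y : Ω → 𝒴)
    (W : Ω → 𝒲) : Prop :=
  (∃ f : 𝒳 → 𝒲, ∀ᵐ ω ∂μ, W ω = f (X ω)) ∧
  (∃ g : 𝒴 → 𝒲, ∀ᵐ ω ∂μ, W ω = g (Y ω)) ∧
  ∀ (𝒲' : Type) (_ : Fintype 𝒲') (W' : Ω → 𝒲'),
    (∃ f' : 𝒳 → 𝒲', ∀ᵐ ω ∂μ, W' ω = f' (X ω)) →
    (∃ g' : 𝒴 → 𝒲', ∀ᵐ ω ∂μ, W' ω = g' (Y ω)) →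
    ∃ h : 𝒲 → 𝒲', ∀ᵐ ω ∂μ, W' ω = h (W ω)

/-- The edge relation on `𝒳 ⊕ 𝒴` of the bipartite graph of the joint law of `(X,Y)`:
`x` and `y` are related whenever `P(X = x ∧ Y = y) > 0`. -/
def edgeRel {𝒳 𝒴 : Type*} (μ : Measure Ω) (X : Ω → 𝒳) (Y : Ω → 𝒴) :
    𝒳 ⊕ 𝒴 → 𝒳 ⊕ 𝒴 → Prop := fun p q =>
  (∃ x y, p = Sum.inl x ∧ q = Sum.inr y ∧ μ {ω | X ω = x ∧ Y ω = y} ≠ 0) ∨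
  (∃ x y, p = Sum.inr y ∧ q = Sum.inl x ∧ μ {ω | X ω = x ∧ Y ω = y} ≠ 0)

/-- A common part of `(X,Y)` always exists; moreover, it may be taken to be `φ ∘ X` where
`φ` maps each `x` to its connected component in the bipartite graph of the joint law
(encoded as the quotient of `𝒳 ⊕ 𝒴` by the edge relation). -/
theorem stmt13 {Ω : Type*} [MeasurableSpace Ω] (μ : Measure Ω) [IsProbabilityMeasure μ]
    {𝒳 𝒴 : Type} [Fintype 𝒳] [Fintype 𝒴] [Nonempty 𝒳] [Nonempty 𝒴]
    (X : Ω → 𝒳) (Y : Ω → 𝒴) (hX : DiscreteRV X) (hY : DiscreteRV Y) :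
    (∃ (𝒲 : Type) (_ : Finite 𝒲) (W : Ω → 𝒲), DiscreteRV W ∧ IsCommonPart μ X Y W) ∧
    IsCommonPart μ X Y (fun ω => Quot.mk (edgeRel μ X Y) (Sum.inl (X ω))) := by
  classical
  have hae : ∀ᵐ ω ∂μ, μ {ω' | X ω' = X ω ∧ Y ω' = Y ω} ≠ 0 := by
    rw [ae_iff]
    refine measure_mono_null (fun ω hω => ?_)
      (measure_iUnion_null (s := fun p : 𝒳 × 𝒴 =>
        if μ {ω' | X ω' = p.1 ∧ Y ω' = p.2} = 0
        then {ω' | X ω' = p.1 ∧ Y ω' = p.2} else ∅) ?_)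
    · simp only [Set.mem_setOf_eq, not_not] at hω
      refine Set.mem_iUnion.2 ⟨(X ω, Y ω), ?_⟩
      simp [hω]
    · intro p
      by_cases h : μ {ω' | X ω' = p.1 ∧ Y ω' = p.2} = 0 <;> simp [h]
  have hcp : IsCommonPart μ X Y (fun ω => Quot.mk (edgeRel μ X Y) (Sum.inl (X ω))) := by
    refine ⟨⟨fun x => Quot.mk _ (Sum.inl x), Filter.Eventually.of_forall fun ω => rfl⟩,
      ⟨fun y => Quot.mk _ (Sum.inr y), ?_⟩, ?_⟩
    · filter_upwards [hae] with ω hω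
      exact Quot.sound (Or.inl ⟨X ω, Y ω, rfl, rfl, hω⟩)
    · rintro 𝒲' _ W' ⟨f', hf'⟩ ⟨g', hg'⟩
      have key : ∀ x y, μ {ω | X ω = x ∧ Y ω = y} ≠ 0 → f' x = g' y := by
        intro x y hμ
        have hA : μ {ω | ¬(W' ω = f' (X ω) ∧ W' ω = g' (Y ω))} = 0 := by
          have h := hf'.and hg'
          rw [ae_iff] at h; exact h
        have hex : ∃ ω, (X ω = x ∧ Y ω = y) ∧ (W' ω = f' (X ω) ∧ W' ω = g' (Y ω)) := by
          by_contra h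
          exact hμ (measure_mono_null (fun ω hω hc => h ⟨ω, hω, hc⟩) hA)
        obtain ⟨ω, ⟨hx, hy⟩, h1, h2⟩ := hex
        rw [← hx, ← hy, ← h1, ← h2]
      have hsound : ∀ p q, edgeRel μ X Y p q → (Sum.elim f' g') p = (Sum.elim f' g') q := by
        rintro p q (⟨x, y, rfl, rfl, hμ⟩ | ⟨x, y, rfl, rfl, hμ⟩)
        · exact key x y hμ
        · exact (key x y hμ).symm
      refine ⟨Quot.lift (Sum.elim f' g') hsound, ?_⟩
      filter_upwards [hf'] with ω hω
      exact hω
  refine ⟨⟨Quot (edgeRel μ X Y), ?_, fun ω => Quot.mk (edgeRel μ X Y) (Sum.inl (X ω)), ?_, hcp⟩, hcp⟩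
  · exact Finite.of_surjective (Quot.mk _) Quot.mk_surjective
  · intro w
    have heq : (fun ω => Quot.mk (edgeRel μ X Y) (Sum.inl (X ω))) ⁻¹' {w} =
        ⋃ x ∈ {x : 𝒳 | Quot.mk (edgeRel μ X Y) (Sum.inl x) = w}, X ⁻¹' {x} := by
      ext ω; simp
    rw [heq]
    exact MeasurableSet.biUnion (Set.to_countable _) fun x _ => hX x

end SecureComputation
end

section
/- Let X, Y, W be finite-valued random variables on a probability space such that W = f ∘ X almost surely and W = g ∘ Y almost surely for some deterministic functions f and g, and such that I[X;Y|W] = 0. Then I[X;Y] = H[W]. -/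
open MeasureTheory Real
open scoped ENNReal

namespace SecureComputation

variable {Ω : Type*} [MeasurableSpace Ω]

lemma ent_congr {𝒳 : Type*} (μ : Measure Ω) {X X' : Ω → 𝒳}
    (h : ∀ᵐ ω ∂μ, X ω = X' ω) : ent μ X = ent μ X' := by
  unfold ent
  refine tsum_congr fun x => ?_
  congr 1
  congr 1
  apply measure_congr
  filter_upwards [h] with ω hω
  show (X ω = x) = (X' ω = x)
  rw [hω]

lemma ent_pair_comp {𝒳 𝒲 : Type} [Fintype 𝒳] [Fintype 𝒲] (μ : Measure Ω)
    (X : Ω → 𝒳) (f : 𝒳 → 𝒲) :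
    ent μ (fun ω => (X ω, f (X ω))) = ent μ X := by
  unfold ent
  rw [tsum_fintype, tsum_fintype, Fintype.sum_prod_type]
  refine Finset.sum_congr rfl fun x _ => ?_
  rw [Finset.sum_eq_single (f x)]
  · have : ((fun ω => (X ω, f (X ω))) ⁻¹' {(x, f x)}) = X ⁻¹' {x} := by
      ext ω
      simp only [Set.mem_preimage, Set.mem_singleton_iff, Prod.mk.injEq]
      constructor
      · rintro ⟨h1, _⟩; exact h1
      · intro h1; exact ⟨h1, by rw [h1]⟩
    rw [this]
  · intro w _ hw
    have : ((fun ω => (X ω, f (X ω))) ⁻¹' {(x, w)}) = ∅ := by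
      ext ω
      simp only [Set.mem_preimage, Set.mem_singleton_iff, Prod.mk.injEq,
        Set.mem_empty_iff_false, iff_false, not_and]
      intro h1; rw [h1]; exact fun h2 => hw h2.symm
    rw [this]
    simp [negMulLog]
  · simp

/-- If `W` is almost surely a deterministic function of `X` alone and of `Y` alone, and
`I[X;Y|W] = 0`, then `I[X;Y] = H[W]`. -/
theorem stmt14 {Ω : Type*} [MeasurableSpace Ω] (μ : Measure Ω) [IsProbabilityMeasure μ]
    {𝒳 𝒴 𝒲 : Type} [Fintype 𝒳] [Fintype 𝒴] [Fintype 𝒲]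
    [Nonempty 𝒳] [Nonempty 𝒴] [Nonempty 𝒲]
    (X : Ω → 𝒳) (Y : Ω → 𝒴) (W : Ω → 𝒲)
    (hX : DiscreteRV X) (hY : DiscreteRV Y) (hW : DiscreteRV W)
    (f : 𝒳 → 𝒲) (g : 𝒴 → 𝒲)
    (hf : ∀ᵐ ω ∂μ, W ω = f (X ω)) (hg : ∀ᵐ ω ∂μ, W ω = g (Y ω))
    (hcmi : cmi μ X Y W = 0) :
    mi μ X Y = ent μ W := by
  have h1 : ent μ (pair X W) = ent μ X := by
    rw [ent_congr μ (show ∀ᵐ ω ∂μ, pair X W ω = (fun ω => (X ω, f (X ω))) ω by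
      filter_upwards [hf] with ω hω; simp [pair, hω])]
    exact ent_pair_comp μ X f
  have h2 : ent μ (pair Y W) = ent μ Y := by
    rw [ent_congr μ (show ∀ᵐ ω ∂μ, pair Y W ω = (fun ω => (Y ω, g (Y ω))) ω by
      filter_upwards [hg] with ω hω; simp [pair, hω])]
    exact ent_pair_comp μ Y g
  have h3 : ent μ (pair (pair X Y) W) = ent μ (pair X Y) := by
    rw [ent_congr μ (show ∀ᵐ ω ∂μ, pair (pair X Y) W ω
        = (fun ω => (pair X Y ω, (f ∘ Prod.fst) (pair X Y ω))) ω by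
      filter_upwards [hf] with ω hω; simp [pair, hω])]
    exact ent_pair_comp μ (pair X Y) (f ∘ Prod.fst)
  unfold cmi at hcmi
  unfold mi
  rw [h1, h2, h3] at hcmi
  linarith


end SecureComputation
end
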